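/- For the Gaussian kernel, the function φ(x) = 1 + 1/x − 2√(2/(1+x²)) satisfies: for every μ ∈ (0,1), the function x ↦ φ(x) + μ/x is strictly increasing on [2, ∞). -/

import Mathlib

lemma gauss_key (x y a b s μ : ℝ) (hx : 2 ≤ x) (hxy : x < y)
    (ha : 0 < a) (hb : 0 < b) (ha2 : a ^ 2 = 1 + x ^ 2) (hb2 : b ^ 2 = 1 + y ^ 2)
    (hs : 0 < s) (hs2 : s ^ 2 = 2) (hμ0 : 0 < μ) (hμ1 : μ < 1) :
    1 + 1 / x - 2 * (s / a) + μ / x < 1 + 1 / y - 2 * (s / b) + μ / y := by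
  have hx0 : (0:ℝ) < x := by linarith
  have hy0 : (0:ℝ) < y := by linarith
  have hyx : (0:ℝ) < y - x := by linarith
  have h1 : 4 * a ^ 2 ≤ 5 * x ^ 2 := by nlinarith
  have h2 : 4 * b ^ 2 ≤ 5 * y ^ 2 := by nlinarith
  have hab1 : 4 * (a * b) ≤ 5 * (x * y) := by
    nlinarith [mul_pos ha hb, mul_pos hx0 hy0, mul_le_mul h1 h2 (by positivity) (by positivity)]
  have hsum : 4 * (a + b) ^ 2 ≤ 5 * (x + y) ^ 2 := by nlinarith
  have hL : 0 < 2 * s * (x * y) * (x + y) := by positivity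
  have habsq : (a * b) ^ 2 ≤ 25 / 16 * (x * y) ^ 2 := by nlinarith [mul_pos ha hb]
  have hA : (a * b) ^ 2 * (a + b) ^ 2 ≤ (25 / 16 * (x * y) ^ 2) * (5 / 4 * (x + y) ^ 2) :=
    mul_le_mul habsq (by linarith) (by positivity) (by positivity)
  have hT : (a * b) ^ 2 * (a + b) ^ 2 ≤ 125 / 64 * ((x * y) ^ 2 * (x + y) ^ 2) := by
    linarith [hA]
  have hμsq : (1 + μ) ^ 2 ≤ 4 := by nlinarith
  have hpos : 0 < (x * y) ^ 2 * (x + y) ^ 2 := by positivity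
  have hsq : ((1 + μ) * (a * b) * (a + b)) ^ 2 < (2 * s * (x * y) * (x + y)) ^ 2 := by
    have e : ((1 + μ) * (a * b) * (a + b)) ^ 2
        = (1 + μ) ^ 2 * ((a * b) ^ 2 * (a + b) ^ 2) := by ring
    have e' : (2 * s * (x * y) * (x + y)) ^ 2
        = 4 * s ^ 2 * ((x * y) ^ 2 * (x + y) ^ 2) := by ring
    rw [e, e', hs2]
    have step1 : (1 + μ) ^ 2 * ((a * b) ^ 2 * (a + b) ^ 2)
        ≤ 4 * ((a * b) ^ 2 * (a + b) ^ 2) :=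
      mul_le_mul_of_nonneg_right hμsq (by positivity)
    linarith [step1, hT, hpos]
  have key : (1 + μ) * (a * b) * (a + b) < 2 * s * (x * y) * (x + y) :=
    lt_of_pow_lt_pow_left₀ 2 hL.le hsq
  have hdiff : (b - a) * (a + b) = (y - x) * (x + y) := by
    linear_combination hb2 - ha2
  have main : (1 + μ) * (y - x) * (a * b) < 2 * s * (b - a) * (x * y) := by
    have h4 := mul_lt_mul_of_pos_right key hyx
    have h5 : 2 * s * (b - a) * (x * y) * (a + b) = 2 * s * (x * y) * (x + y) * (y - x) := by
      linear_combination (2 * s * (x * y)) * hdiff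
    have h3 : ((1 + μ) * (y - x) * (a * b)) * (a + b)
        < (2 * s * (b - a) * (x * y)) * (a + b) := by linarith [h4, h5]
    exact lt_of_mul_lt_mul_right h3 (by positivity)
  have e1 : 1 / x + μ / x - (1 / y + μ / y) = (1 + μ) * (y - x) / (x * y) := by
    field_simp
  have e2 : 2 * (s / a) - 2 * (s / b) = 2 * s * (b - a) / (a * b) := by
    field_simp
  have hdd : (1 + μ) * (y - x) / (x * y) < 2 * s * (b - a) / (a * b) := by
    rw [div_lt_div_iff₀ (by positivity) (by positivity)]
    linarith [main]
  linarith [e1, e2, hdd]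

theorem gaussian_phi_plus_mu_div_strictMono
    (φ : ℝ → ℝ) (hφ : ∀ x, φ x = 1 + 1 / x - 2 * Real.sqrt (2 / (1 + x ^ 2))) :
    ∀ μ : ℝ, μ ∈ Set.Ioo (0 : ℝ) 1 →
      StrictMonoOn (fun x => φ x + μ / x) (Set.Ici (2 : ℝ)) := by
  intro μ hμ x hx y hy hxy
  simp only [Set.mem_Ici] at hx hy
  simp only [hφ]
  have h2x : (0:ℝ) < 1 + x ^ 2 := by positivity
  have h2y : (0:ℝ) < 1 + y ^ 2 := by positivity
  have ex : Real.sqrt (2 / (1 + x ^ 2)) = Real.sqrt 2 / Real.sqrt (1 + x ^ 2) :=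
    Real.sqrt_div (by norm_num) _
  have ey : Real.sqrt (2 / (1 + y ^ 2)) = Real.sqrt 2 / Real.sqrt (1 + y ^ 2) :=
    Real.sqrt_div (by norm_num) _
  rw [ex, ey]
  exact gauss_key x y _ _ _ μ hx hxy (Real.sqrt_pos.mpr h2x) (Real.sqrt_pos.mpr h2y)
    (Real.sq_sqrt h2x.le) (Real.sq_sqrt h2y.le) (Real.sqrt_pos.mpr (by norm_num))
    (Real.sq_sqrt (by norm_num)) hμ.1 hμ.2
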